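/- For every n ≥ 1, LS(n+3, n) = 8·(280·C(n+4, 9) + 448·C(n+4, 8) + 219·C(n+4, 7) + 34·C(n+4, 6) + C(n+4, 5)), where C(·,·) is the usual binomial coefficient. -/
import Mathlib


/-- Legendre-Stirling numbers of the second kind. -/
def LS : ℕ → ℕ → ℕ
  | 0, 0 => 1
  | 0, _ + 1 => 0
  | _ + 1, 0 => 0
  | n + 1, k + 1 => LS n k + (k + 1) * (k + 2) * LS n (k + 1)

lemma LS_of_lt : ∀ n k, n < k → LS n k = 0 := by
  intro n
  induction n with
  | zero => rintro (_ | k) h; · omega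
            · rfl
  | succ n ih =>
    rintro (_ | k) h
    · omega
    · show LS n k + (k + 1) * (k + 2) * LS n (k + 1) = 0
      rw [ih k (by omega), ih (k + 1) (by omega)]
      simp

lemma LS_diag : ∀ n, LS n n = 1 := by
  intro n
  induction n with
  | zero => rfl
  | succ n ih =>
    show LS n n + (n + 1) * (n + 2) * LS n (n + 1) = 1
    rw [ih, LS_of_lt n (n + 1) (by omega)]
    simp

lemma l1 (n : ℕ) : (3 : ℚ) * LS (n + 1) n = n * (n + 1) * (n + 2) := by
  induction n with
  | zero => norm_num [LS]
  | succ n ih =>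
    have h : LS (n + 2) (n + 1) = LS (n + 1) n + (n + 1) * (n + 2) * LS (n + 1) (n + 1) := rfl
    rw [h, LS_diag]
    push_cast
    linear_combination ih

lemma l2 (n : ℕ) : (90 : ℚ) * LS (n + 2) n =
    6 * n + 65 * n ^ 2 + 135 * n ^ 3 + 110 * n ^ 4 + 39 * n ^ 5 + 5 * n ^ 6 := by
  induction n with
  | zero => norm_num [LS]
  | succ n ih =>
    have h : LS (n + 3) (n + 1) = LS (n + 2) n + (n + 1) * (n + 2) * LS (n + 2) (n + 1) := rfl
    have h1 := l1 (n + 1)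
    rw [h]
    push_cast at h1 ⊢
    linear_combination ih + 30 * ((n : ℚ) + 1) * (n + 2) * h1

lemma l3 (n : ℕ) : (5670 : ℚ) * LS (n + 3) n =
    -144 * n + 252 * n ^ 2 + 5068 * n ^ 3 + 13041 * n ^ 4 + 14784 * n ^ 5 + 8883 * n ^ 6 +
      2937 * n ^ 7 + 504 * n ^ 8 + 35 * n ^ 9 := by
  induction n with
  | zero => norm_num [LS]
  | succ n ih =>
    have h : LS (n + 4) (n + 1) = LS (n + 3) n + (n + 1) * (n + 2) * LS (n + 3) (n + 1) := rfl
    have h2 := l2 (n + 1)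
    rw [h]
    push_cast at h2 ⊢
    linear_combination ih + 63 * ((n : ℚ) + 1) * (n + 2) * h2

lemma desc_eq (a k : ℕ) : Nat.choose a k * Nat.factorial k = Nat.descFactorial a k := by
  rw [Nat.descFactorial_eq_factorial_mul_choose, Nat.mul_comm]

theorem LS_add_three (n : ℕ) (hn : 1 ≤ n) :
    LS (n + 3) n =
      8 * (280 * Nat.choose (n + 4) 9 + 448 * Nat.choose (n + 4) 8 +
        219 * Nat.choose (n + 4) 7 + 34 * Nat.choose (n + 4) 6 + Nat.choose (n + 4) 5) := by
  match n, hn with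
  | 1, _ => decide
  | 2, _ => decide
  | 3, _ => decide
  | 4, _ => decide
  | (m + 5), _ =>
    have h9 : Nat.choose (m + 9) 9 * 362880 =
        (m+9)*(m+8)*(m+7)*(m+6)*(m+5)*(m+4)*(m+3)*(m+2)*(m+1) := by
      have := desc_eq (m + 9) 9
      simp [Nat.descFactorial] at this
      rw [show Nat.factorial 9 = 362880 from rfl] at this
      rw [this]; ring
    have h8 : Nat.choose (m + 9) 8 * 40320 =
        (m+9)*(m+8)*(m+7)*(m+6)*(m+5)*(m+4)*(m+3)*(m+2) := by
      have := desc_eq (m + 9) 8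
      simp [Nat.descFactorial] at this
      rw [show Nat.factorial 8 = 40320 from rfl] at this
      rw [this]; ring
    have h7 : Nat.choose (m + 9) 7 * 5040 =
        (m+9)*(m+8)*(m+7)*(m+6)*(m+5)*(m+4)*(m+3) := by
      have := desc_eq (m + 9) 7
      simp [Nat.descFactorial] at this
      rw [show Nat.factorial 7 = 5040 from rfl] at this
      rw [this]; ring
    have h6 : Nat.choose (m + 9) 6 * 720 =
        (m+9)*(m+8)*(m+7)*(m+6)*(m+5)*(m+4) := by
      have := desc_eq (m + 9) 6
      simp [Nat.descFactorial] at this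
      rw [show Nat.factorial 6 = 720 from rfl] at this
      rw [this]; ring
    have h5 : Nat.choose (m + 9) 5 * 120 =
        (m+9)*(m+8)*(m+7)*(m+6)*(m+5) := by
      have := desc_eq (m + 9) 5
      simp [Nat.descFactorial] at this
      rw [show Nat.factorial 5 = 120 from rfl] at this
      rw [this]; ring
    have h3 := l3 (m + 5)
    have key : ((LS (m + 5 + 3) (m + 5) : ℚ)) =
        ((8 * (280 * Nat.choose (m + 5 + 4) 9 + 448 * Nat.choose (m + 5 + 4) 8 +
          219 * Nat.choose (m + 5 + 4) 7 + 34 * Nat.choose (m + 5 + 4) 6 +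
          Nat.choose (m + 5 + 4) 5) : ℕ) : ℚ) := by
      have e9 : ((Nat.choose (m + 9) 9 : ℕ) : ℚ) * 362880 =
          ((m:ℚ)+9)*((m:ℚ)+8)*((m:ℚ)+7)*((m:ℚ)+6)*((m:ℚ)+5)*((m:ℚ)+4)*((m:ℚ)+3)*((m:ℚ)+2)*((m:ℚ)+1) := by
        exact_mod_cast congrArg (Nat.cast : ℕ → ℚ) h9
      have e8 : ((Nat.choose (m + 9) 8 : ℕ) : ℚ) * 40320 =
          ((m:ℚ)+9)*((m:ℚ)+8)*((m:ℚ)+7)*((m:ℚ)+6)*((m:ℚ)+5)*((m:ℚ)+4)*((m:ℚ)+3)*((m:ℚ)+2) := by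
        exact_mod_cast congrArg (Nat.cast : ℕ → ℚ) h8
      have e7 : ((Nat.choose (m + 9) 7 : ℕ) : ℚ) * 5040 =
          ((m:ℚ)+9)*((m:ℚ)+8)*((m:ℚ)+7)*((m:ℚ)+6)*((m:ℚ)+5)*((m:ℚ)+4)*((m:ℚ)+3) := by
        exact_mod_cast congrArg (Nat.cast : ℕ → ℚ) h7
      have e6 : ((Nat.choose (m + 9) 6 : ℕ) : ℚ) * 720 =
          ((m:ℚ)+9)*((m:ℚ)+8)*((m:ℚ)+7)*((m:ℚ)+6)*((m:ℚ)+5)*((m:ℚ)+4) := by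
        exact_mod_cast congrArg (Nat.cast : ℕ → ℚ) h6
      have e5 : ((Nat.choose (m + 9) 5 : ℕ) : ℚ) * 120 =
          ((m:ℚ)+9)*((m:ℚ)+8)*((m:ℚ)+7)*((m:ℚ)+6)*((m:ℚ)+5) := by
        exact_mod_cast congrArg (Nat.cast : ℕ → ℚ) h5
      have hm : ((m + 5 : ℕ) : ℚ) = (m : ℚ) + 5 := by push_cast; ring
      push_cast [show m + 5 + 4 = m + 9 from rfl] at *
      linear_combination (1/5670) * h3 - (1/162) * e9 - (4/45) * e8 - (73/210) * e7
        - (17/45) * e6 - (1/15) * e5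
    exact_mod_cast key
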